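/- Let f ∈ C[x_1,...,x_N] be an irreducible polynomial, not divisible by any variable, whose Newton polytope is a line segment. Then f is a binomial, i.e., f has exactly two monomials with nonzero coefficients. -/

import Mathlib

open MvPolynomial
variable {N : ℕ}



/-- divisibility by X i via coefficients -/
lemma X_dvd_iff' {i : Fin N} {p : MvPolynomial (Fin N) ℂ} :
    X i ∣ p ↔ ∀ v : Fin N →₀ ℕ, v i = 0 → coeff v p = 0 := by
  rw [MvPolynomial.X_dvd_iff_modMonomial_eq_zero]
  constructor
  · intro h v hv
    have h1 : ¬ Finsupp.single i 1 ≤ v := by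
      rw [Finsupp.single_le_iff, hv]; omega
    rw [← MvPolynomial.coeff_modMonomial_of_not_le p h1, h]
    simp
  · intro h
    ext v
    by_cases hle : Finsupp.single i 1 ≤ v
    · rw [MvPolynomial.coeff_modMonomial_of_le p hle]; simp
    · have hv : v i = 0 := by
        by_contra hne
        exact hle (Finsupp.single_le_iff.2 (by omega))
      rw [MvPolynomial.coeff_modMonomial_of_not_le p hle, h v hv]
      simp

lemma prime_X_mv (i : Fin N) : Prime (X i : MvPolynomial (Fin N) ℂ) := by
  classical
  set θ : MvPolynomial (Fin N) ℂ →ₐ[ℂ] MvPolynomial (Fin N) ℂ :=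
    aeval (fun j => if j = i then 0 else X j) with hθ
  have key : ∀ p : MvPolynomial (Fin N) ℂ, X i ∣ (p - θ p) := by
    intro p
    induction p using MvPolynomial.induction_on with
    | C a => simp [hθ]
    | add p q hp hq =>
      have : p + q - θ (p + q) = (p - θ p) + (q - θ q) := by rw [map_add]; ring
      rw [this]; exact dvd_add hp hq
    | mul_X p j hp =>
      rw [map_mul, aeval_X]
      by_cases hj : j = i
      · subst hj
        have h2 : p * X j - θ p * (if j = j then (0:MvPolynomial (Fin N) ℂ) else X j) = p * X j := by
          rw [if_pos rfl]; ring
        rw [h2]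
        exact Dvd.intro_left p rfl
      · rw [if_neg hj]
        have : p * X j - θ p * X j = (p - θ p) * X j := by ring
        rw [this]
        exact Dvd.dvd.mul_right hp _
  have hdvd : ∀ p : MvPolynomial (Fin N) ℂ, X i ∣ p ↔ θ p = 0 := by
    intro p
    constructor
    · rintro ⟨q, rfl⟩
      rw [map_mul]
      simp [hθ]
    · intro h
      have := key p
      rwa [h, sub_zero] at this
  constructor
  · exact X_ne_zero i
  constructor
  · intro hu
    obtain ⟨q, hq⟩ := hu.exists_right_inv
    have := congrArg (constantCoeff) hq
    simp at this
  · intro a b hab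
    rw [hdvd] at hab
    rw [map_mul] at hab
    rcases mul_eq_zero.1 hab with h | h
    · exact Or.inl ((hdvd a).2 h)
    · exact Or.inr ((hdvd b).2 h)

lemma pow_X_dvd_monomial {i : Fin N} {t : ℕ} {v : Fin N →₀ ℕ} {c : ℂ} (hc : c ≠ 0)
    (h : (X i : MvPolynomial (Fin N) ℂ) ^ t ∣ monomial v c) : t ≤ v i := by
  obtain ⟨q, hq⟩ := h
  rw [mul_comm, X_pow_eq_monomial] at hq
  have := congrArg (coeff v) hq
  rw [coeff_monomial, if_pos rfl, MvPolynomial.coeff_mul_monomial'] at this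
  split_ifs at this with hle
  · have := Finsupp.single_le_iff.1 hle
    simpa using this
  · exact absurd this hc

/-- support of a binomial -/
lemma binomial_support {u w : Fin N →₀ ℕ} (huw : u ≠ w) {a b : ℂ} (ha : a ≠ 0) (hb : b ≠ 0) :
    (monomial u a + monomial w b : MvPolynomial (Fin N) ℂ).support = {u, w} := by
  apply Finset.Subset.antisymm
  · refine (MvPolynomial.support_add).trans ?_
    intro v hv
    simp only [Finset.mem_union] at hv
    rcases hv with h | h
    · exact Finset.mem_insert.2 (Or.inl (by simpa using (support_monomial_subset h)))
    · exact Finset.mem_insert.2 (Or.inr (by simpa using (support_monomial_subset h)))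
  · intro v hv
    simp only [Finset.mem_insert, Finset.mem_singleton] at hv
    rw [MvPolynomial.mem_support_iff]
    rcases hv with rfl | rfl
    · rw [coeff_add, coeff_monomial, coeff_monomial, if_pos rfl, if_neg (Ne.symm huw), add_zero]
      exact ha
    · rw [coeff_add, coeff_monomial, coeff_monomial, if_neg huw, if_pos rfl, zero_add]
      exact hb

lemma binomial_not_unit {u w : Fin N →₀ ℕ} {r : ℂ} (hr : r ≠ 0) (i0 : Fin N)
    (hu : 0 < u i0) (hw : w i0 = 0) :
    ¬ IsUnit (monomial u 1 - C r * monomial w 1 : MvPolynomial (Fin N) ℂ) := by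
  obtain ⟨ζ, hζ⟩ := IsAlgClosed.exists_pow_nat_eq r hu
  set z : Fin N → ℂ := fun j => if j = i0 then ζ else 1 with hz
  have hprod : ∀ v : Fin N →₀ ℕ, (v.prod fun j k => z j ^ k) = ζ ^ v i0 := by
    intro v
    rw [Finsupp.prod]
    by_cases h : i0 ∈ v.support
    · rw [Finset.prod_eq_single_of_mem i0 h]
      · simp [hz]
      · intro b _ hb; simp [hz, if_neg hb]
    · rw [Finset.prod_eq_one, (Finsupp.notMem_support_iff.1 h)]
      · simp
      · intro b hb
        have hb' : b ≠ i0 := fun he => h (he ▸ hb)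
        simp [hz, if_neg hb']
  intro hunit
  have h0 : eval z (monomial u 1 - C r * monomial w 1 : MvPolynomial (Fin N) ℂ) = 0 := by
    rw [map_sub, map_mul, eval_C, eval_monomial, eval_monomial, hprod, hprod, hw, hζ]
    ring
  have := hunit.map (eval z)
  rw [h0] at this
  exact not_isUnit_zero this

lemma endpoint_mem {S : Set (Fin N → ℝ)} (hfin : S.Finite)
    {a b : Fin N → ℝ} (h : convexHull ℝ S = segment ℝ a b)
    (ℓ : (Fin N → ℝ) →ₗ[ℝ] ℝ) (hab : ℓ a < ℓ b) : a ∈ S := by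
  have hne : S.Nonempty := by
    by_contra hS
    rw [Set.not_nonempty_iff_eq_empty] at hS
    rw [hS, convexHull_empty] at h
    exact (h ▸ left_mem_segment ℝ a b : (a : Fin N → ℝ) ∈ (∅ : Set (Fin N → ℝ)))
  obtain ⟨s0, hs0S, hs0min⟩ := Set.exists_min_image S ℓ hfin hne
  -- convex hull is contained in the halfspace ℓ ≥ ℓ s0
  have hhalf : convexHull ℝ S ⊆ {x | ℓ s0 ≤ ℓ x} := by
    apply convexHull_min
    · intro s hs; exact hs0min s hs
    · exact convex_halfSpace_ge ⟨fun x y => ℓ.map_add x y, fun c x => ℓ.map_smul c x⟩ (ℓ s0)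
  have hain : a ∈ convexHull ℝ S := h ▸ left_mem_segment ℝ a b
  have h1 : ℓ s0 ≤ ℓ a := hhalf hain
  -- s0 lies on the segment
  have hs0seg : s0 ∈ segment ℝ a b := h ▸ subset_convexHull ℝ S hs0S
  rw [segment_eq_image ℝ a b] at hs0seg
  obtain ⟨t, htI, hts⟩ := hs0seg
  obtain ⟨ht0, ht1⟩ := Set.mem_Icc.1 htI
  -- so ℓ s0 = (1-t) ℓ a + t ℓ b ≥ ℓ a with equality iff t = 0
  have hls0 : ℓ s0 = (1 - t) * ℓ a + t * ℓ b := by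
    rw [← hts]; simp [map_add, map_smul, smul_eq_mul]
  have ht : t = 0 := by nlinarith
  have : s0 = a := by rw [← hts, ht]; simp
  exact this ▸ hs0S


lemma X_pow_dvd_monomial {i : Fin N} {t : ℕ} {v : Fin N →₀ ℕ} (h : t ≤ v i) (c : ℂ) :
    (X i : MvPolynomial (Fin N) ℂ) ^ t ∣ monomial v c := by
  refine ⟨monomial (v - Finsupp.single i t) c, ?_⟩
  rw [X_pow_eq_monomial, monomial_mul, one_mul]
  have hexp : Finsupp.single i t + (v - Finsupp.single i t) = v := by
    ext j
    simp only [Finsupp.add_apply, Finsupp.tsub_apply, Finsupp.single_apply]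
    split_ifs with hj
    · subst hj; omega
    · omega
  rw [hexp]

set_option maxHeartbeats 1000000 in
lemma main_lemma (f : MvPolynomial (Fin N) ℂ)
    (hirr : Irreducible f) (hvar : ∀ i : Fin N, ¬ (X i ∣ f))
    (αa αb : Fin N →₀ ℕ) (ha : αa ∈ f.support) (hb : αb ∈ f.support)
    (i0 : Fin N) (hlt : αa i0 < αb i0)
    (hline : ∀ α ∈ f.support, ∃ t : ℝ, 0 ≤ t ∧ t ≤ 1 ∧
      ∀ i, (α i : ℝ) = (αa i : ℝ) + t * ((αb i : ℝ) - (αa i : ℝ))) :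
    f.support.card = 2 := by
  classical
  -- basic integer data
  set d : Fin N → ℤ := fun i => (αb i : ℤ) - (αa i : ℤ) with hd
  have hd0 : 0 < d i0 := by simp only [hd]; omega
  set n : (Fin N →₀ ℕ) → ℕ := fun α => α i0 - αa i0 with hn
  have hbase : ∀ α ∈ f.support, (αa i0 ≤ α i0 ∧ α i0 ≤ αb i0) ∧
      ∀ i, ((α i : ℤ) - (αa i : ℤ)) * d i0 = ((α i0 : ℤ) - (αa i0 : ℤ)) * d i := by
    intro α hα
    obtain ⟨t, ht0, ht1, hts⟩ := hline α hα
    have hDr : (0:ℝ) < (αb i0 : ℝ) - (αa i0 : ℝ) := by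
      have : (αa i0 : ℝ) < (αb i0 : ℝ) := by exact_mod_cast hlt
      linarith
    have hi0 := hts i0
    constructor
    · constructor
      · have : (αa i0 : ℝ) ≤ (α i0 : ℝ) := by rw [hi0]; nlinarith
        exact_mod_cast this
      · have : (α i0 : ℝ) ≤ (αb i0 : ℝ) := by rw [hi0]; nlinarith
        exact_mod_cast this
    · intro i
      have hre : ((α i : ℝ) - (αa i : ℝ)) * ((αb i0 : ℝ) - (αa i0 : ℝ))
          = ((α i0 : ℝ) - (αa i0 : ℝ)) * ((αb i : ℝ) - (αa i : ℝ)) := by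
        rw [hts i, hi0]; ring
      simp only [hd]
      exact_mod_cast hre
  have hstar : ∀ α ∈ f.support, ∀ i,
      ((α i : ℤ) - (αa i : ℤ)) * d i0 = (n α : ℤ) * d i := by
    intro α hα i
    have h1 := (hbase α hα).1.1
    have h2 := (hbase α hα).2 i
    have : ((n α : ℤ)) = (α i0 : ℤ) - (αa i0 : ℤ) := by simp only [hn]; omega
    rw [this]; exact h2
  set Dn : ℕ := αb i0 - αa i0 with hDn
  have hDpos : 0 < Dn := by omega
  have hnb : n αb = Dn := rfl
  have hna : n αa = 0 := by simp [hn]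
  have hnle : ∀ α ∈ f.support, n α ≤ Dn := by
    intro α hα
    have := (hbase α hα).1
    simp only [hn, hDn]; omega
  set e : ℕ := f.support.gcd n with he
  have he_dvd : ∀ α ∈ f.support, e ∣ n α := fun α hα => Finset.gcd_dvd hα
  have he0 : e ≠ 0 := by
    intro h0
    have := Finset.gcd_eq_zero_iff.1 (he ▸ h0 ▸ rfl : f.support.gcd n = 0)
    have := this αb hb
    omega
  set m : ℕ := Dn / e with hm
  set k : (Fin N →₀ ℕ) → ℕ := fun α => n α / e with hk
  have hkb : k αb = m := rfl
  have hka : k αa = 0 := by simp [hk, hna]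
  have hgdvd : ∀ i, (d i0) ∣ (e : ℤ) * d i := by
    intro i
    have hnat : Dn ∣ e * (d i).natAbs := by
      have hdvd_each : ∀ α ∈ f.support, Dn ∣ n α * (d i).natAbs := by
        intro α hα
        have h1 := hstar α hα i
        have h2 : ((α i : ℤ) - (αa i : ℤ)).natAbs * Dn = n α * (d i).natAbs := by
          have hDn' : (Dn : ℤ) = d i0 := by simp only [hd, hDn]; omega
          have := congrArg Int.natAbs h1
          rwa [Int.natAbs_mul, Int.natAbs_mul, ← hDn', Int.natAbs_natCast] at this
        exact ⟨((α i : ℤ) - (αa i : ℤ)).natAbs, by rw [← h2]; ring⟩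
      have : f.support.gcd (fun α => n α * (d i).natAbs) = e * (d i).natAbs := by
        rw [Finset.gcd_mul_right]
        simp [he]
      exact this ▸ Finset.dvd_gcd hdvd_each
    have hDn' : (Dn : ℤ) = d i0 := by simp only [hd, hDn]; omega
    rw [← hDn']
    have : ((e * (d i).natAbs : ℕ) : ℤ) = (e : ℤ) * (d i).natAbs := by push_cast; ring
    rcases Int.natAbs_eq (d i) with habs | habs
    · rw [habs, ← this]
      exact Int.natCast_dvd_natCast.2 hnat
    · rw [habs]
      have : (e:ℤ) * -((d i).natAbs : ℤ) = -((e * (d i).natAbs : ℕ) : ℤ) := by push_cast; ring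
      rw [this]
      exact (Int.natCast_dvd_natCast.2 hnat).neg_right
  set g : Fin N → ℤ := fun i => (e : ℤ) * d i / d i0 with hg
  have hgmul : ∀ i, g i * d i0 = (e : ℤ) * d i := by
    intro i
    exact Int.ediv_mul_cancel (hgdvd i)
  have hdne : d i0 ≠ 0 := ne_of_gt hd0
  have hgi0 : g i0 = (e : ℤ) := mul_right_cancel₀ hdne (hgmul i0)
  have hαk : ∀ α ∈ f.support, ∀ i, (α i : ℤ) = (αa i : ℤ) + (k α : ℤ) * g i := by
    intro α hα i
    have h1 := hstar α hα i
    have h2 : (n α : ℤ) = (k α : ℤ) * e := by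
      rw [hk]
      have := Nat.div_mul_cancel (he_dvd α hα)
      exact_mod_cast (by exact_mod_cast this.symm : (n α : ℤ) = ((n α / e) * e : ℕ))
    have h3 := hgmul i
    have : ((α i : ℤ) - (αa i : ℤ)) * d i0 = ((k α : ℤ) * g i) * d i0 := by
      rw [h1, h2]
      calc (k α : ℤ) * e * d i = (k α : ℤ) * ((e:ℤ) * d i) := by ring
        _ = (k α : ℤ) * (g i * d i0) := by rw [h3]
        _ = (k α : ℤ) * g i * d i0 := by ring
    have := mul_right_cancel₀ hdne this
    omega
  have hkinj : ∀ α ∈ f.support, ∀ β ∈ f.support, k α = k β → α = β := by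
    intro α hα β hβ hkk
    ext i
    have h1 := hαk α hα i
    have h2 := hαk β hβ i
    rw [hkk] at h1
    omega
  have hkle : ∀ α ∈ f.support, k α ≤ m := by
    intro α hα
    exact Nat.div_le_div_right (hnle α hα)
  have hm1 : 1 ≤ m := by
    by_contra hm0
    have : m = 0 := by omega
    have := hkinj αa ha αb hb (by rw [hka, hkb, this])
    rw [this] at hlt; omega
  -- positive and negative parts of g
  set u : Fin N →₀ ℕ := Finsupp.equivFunOnFinite.symm (fun i => (g i).toNat) with hu
  set w : Fin N →₀ ℕ := Finsupp.equivFunOnFinite.symm (fun i => (-(g i)).toNat) with hw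
  have huap : ∀ i, u i = (g i).toNat := fun i => rfl
  have hwap : ∀ i, w i = (-(g i)).toNat := fun i => rfl
  have huw : ∀ i, (u i : ℤ) - (w i : ℤ) = g i := by
    intro i; rw [huap, hwap]; omega
  have huwmin : ∀ i, u i = 0 ∨ w i = 0 := by
    intro i; rw [huap, hwap]; omega
  have hui0 : u i0 = e := by rw [huap, hgi0]; omega
  have hwi0 : w i0 = 0 := by rw [hwap, hgi0]; omega
  have hune : u ≠ w := by
    intro h
    have : u i0 = w i0 := by rw [h]
    rw [hui0, hwi0] at this; omega
  -- the univariate polynomial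
  set P : Polynomial ℂ := ∑ α ∈ f.support, Polynomial.C (f.coeff α) * Polynomial.X ^ (k α)
    with hP
  have hPcoeff : ∀ β ∈ f.support, P.coeff (k β) = f.coeff β := by
    intro β hβ
    rw [hP, Polynomial.finset_sum_coeff]
    rw [Finset.sum_eq_single β]
    · simp
    · intro α hα hne
      have : k α ≠ k β := fun hkk => hne (hkinj α hα β hβ hkk)
      simp only [Polynomial.coeff_C_mul, Polynomial.coeff_X_pow]
      simp only [mul_ite, mul_one, mul_zero, ite_eq_right_iff]
      intro h'
      exact absurd h'.symm this
    · intro hβ'; exact absurd hβ hβ'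
  have hPhigh : ∀ j, m < j → P.coeff j = 0 := by
    intro j hj
    rw [hP, Polynomial.finset_sum_coeff]
    apply Finset.sum_eq_zero
    intro α hα
    have : k α ≠ j := by have := hkle α hα; omega
    simp only [Polynomial.coeff_C_mul, Polynomial.coeff_X_pow]
    simp only [mul_ite, mul_one, mul_zero, ite_eq_right_iff]
    intro h'
    exact absurd h'.symm this
  have hfb : f.coeff αb ≠ 0 := mem_support_iff.1 hb
  have hfa : f.coeff αa ≠ 0 := mem_support_iff.1 ha
  have hPm : P.coeff m ≠ 0 := by rw [← hkb, hPcoeff αb hb]; exact hfb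
  have hP0 : P.coeff 0 ≠ 0 := by rw [← hka, hPcoeff αa ha]; exact hfa
  have hPne : P ≠ 0 := fun h => hPm (by rw [h]; simp)
  have hdeg : P.natDegree = m := by
    apply le_antisymm
    · exact Polynomial.natDegree_le_iff_coeff_eq_zero.2 fun j hj => hPhigh j hj
    · exact Polynomial.le_natDegree_of_ne_zero hPm
  -- roots
  set rts : Multiset ℂ := P.roots with hrts
  have hsplits : P.Splits := IsAlgClosed.splits P
  have hcard : Multiset.card rts = m := by
    rw [hrts, Polynomial.splits_iff_card_roots.1 hsplits, hdeg]
  have hfact : P = Polynomial.C P.leadingCoeff *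
      (rts.map fun r => Polynomial.X - Polynomial.C r).prod :=
    hsplits.eq_prod_roots
  set lc : ℂ := P.leadingCoeff with hlc
  have hlcne : lc ≠ 0 := Polynomial.leadingCoeff_ne_zero.2 hPne
  have hr0 : ∀ r ∈ rts, r ≠ 0 := by
    intro r hr hr0
    have := Polynomial.isRoot_of_mem_roots hr
    rw [hr0] at this
    rw [Polynomial.IsRoot, ← Polynomial.coeff_zero_eq_eval_zero] at this
    exact hP0 this
  -- move to the fraction field
  set ι : MvPolynomial (Fin N) ℂ →+* FractionRing (MvPolynomial (Fin N) ℂ) :=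
    algebraMap (MvPolynomial (Fin N) ℂ) (FractionRing (MvPolynomial (Fin N) ℂ)) with hι
  have hιinj : Function.Injective ι := IsFractionRing.injective _ _
  set φ : ℂ →+* FractionRing (MvPolynomial (Fin N) ℂ) := ι.comp (C : ℂ →+* MvPolynomial (Fin N) ℂ) with hφ
  set A := ι (monomial u 1) with hA
  set B := ι (monomial w 1) with hB
  have hBne : B ≠ 0 := by
    rw [hB]
    intro h0
    have := hιinj (h0.trans (map_zero ι).symm)
    exact one_ne_zero (monomial_eq_zero.1 this)
  set y := A / B with hy
  have hterm : ∀ α ∈ f.support,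
      monomial α (coeff α f) * (monomial w 1) ^ (k α)
        = monomial αa (coeff α f) * (monomial u 1) ^ (k α) := by
    intro α hα
    have hexp : α + k α • w = αa + k α • u := by
      ext i
      simp only [Finsupp.add_apply, Finsupp.smul_apply, smul_eq_mul]
      have h1 := hαk α hα i
      rw [← huw i] at h1
      have hz : (α i : ℤ) + (k α : ℤ) * (w i : ℤ) = (αa i : ℤ) + (k α : ℤ) * (u i : ℤ) := by
        rw [h1]; ring
      exact_mod_cast hz
    rw [monomial_pow, monomial_pow, one_pow, monomial_mul, monomial_mul, hexp]
  have hKterm : ∀ α ∈ f.support,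
      ι (monomial α (coeff α f)) = ι (monomial αa 1) * (φ (coeff α f) * y ^ (k α)) := by
    intro α hα
    rw [hy, div_pow, ← mul_div_assoc, ← mul_div_assoc, eq_div_iff (pow_ne_zero _ hBne)]
    have hmid : monomial α (coeff α f) * (monomial w 1) ^ (k α)
        = monomial αa 1 * C (coeff α f) * (monomial u 1) ^ (k α) := by
      calc monomial α (coeff α f) * (monomial w 1) ^ (k α)
          = monomial αa (coeff α f) * (monomial u 1) ^ (k α) := hterm α hα
        _ = monomial αa 1 * C (coeff α f) * (monomial u 1) ^ (k α) := by
            rw [mul_comm (monomial αa (1:ℂ)) _, C_mul_monomial, mul_one]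
    calc ι (monomial α (coeff α f)) * B ^ k α
        = ι (monomial α (coeff α f) * (monomial w 1) ^ k α) := by rw [map_mul, map_pow, hB]
      _ = ι (monomial αa 1 * C (coeff α f) * (monomial u 1) ^ k α) := congrArg ι hmid
      _ = ι (monomial αa 1) * φ (coeff α f) * A ^ k α := by rw [map_mul, map_mul, map_pow, hA]; rfl
      _ = ι (monomial αa 1) * (φ (coeff α f) * A ^ k α) := by ring
  have hKf : ι f = ι (monomial αa 1) * Polynomial.eval₂ φ y P := by
    have hfs : ι f = ∑ α ∈ f.support, ι (monomial α (coeff α f)) := by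
      conv_lhs => rw [f.as_sum]
      exact map_sum ι _ _
    rw [hfs, hP, Polynomial.eval₂_finset_sum, Finset.mul_sum]
    apply Finset.sum_congr rfl
    intro α hα
    rw [Polynomial.eval₂_mul, Polynomial.eval₂_C, Polynomial.eval₂_X_pow]
    exact hKterm α hα
  have hPy : Polynomial.eval₂ φ y P = φ lc * ((rts.map fun r => y - φ r)).prod := by
    conv_lhs => rw [hfact]
    have hE : ∀ p : Polynomial ℂ, Polynomial.eval₂ φ y p = Polynomial.eval₂RingHom φ y p :=
      fun _ => rfl
    rw [hE, map_mul, map_multiset_prod, Multiset.map_map]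
    congr 1
    · exact Polynomial.eval₂_C _ _
    · apply congrArg Multiset.prod
      apply Multiset.map_congr rfl
      intro r _
      simp only [Function.comp_apply, Polynomial.coe_eval₂RingHom, Polynomial.eval₂_sub,
        Polynomial.eval₂_X, Polynomial.eval₂_C]
  -- clear denominators and descend to the polynomial ring
  set Q : MvPolynomial (Fin N) ℂ :=
    ((rts.map fun r => monomial u 1 - C r * monomial w 1)).prod with hQ
  have hdag : f * (monomial w 1) ^ m = monomial αa lc * Q := by
    apply hιinj
    rw [map_mul, map_pow, ← hB]
    rw [hKf, hPy]
    have hBm : B ^ m = (rts.map fun _ => B).prod := by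
      rw [Multiset.map_const', Multiset.prod_replicate, hcard]
    rw [mul_assoc, mul_assoc, hBm, ← Multiset.prod_map_mul]
    have hfac : (rts.map fun r => (y - φ r) * B) = rts.map fun r => ι (monomial u 1 - C r * monomial w 1) := by
      apply Multiset.map_congr rfl
      intro r hr
      rw [sub_mul, hy, div_mul_cancel₀ _ hBne]
      have hφr : φ r = ι (C r) := rfl
      rw [hφr, hA, hB, ← map_mul, ← map_sub]
    rw [hfac]
    have hQι : (rts.map fun r => ι (monomial u 1 - C r * monomial w 1)).prod = ι Q := by
      rw [hQ, map_multiset_prod, Multiset.map_map]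
      rfl
    rw [hQι, map_mul]
    have hφlc : φ lc = ι (C lc) := rfl
    rw [hφlc, ← map_mul, ← map_mul, ← map_mul]
    apply congrArg ι
    rw [← mul_assoc, mul_comm (monomial αa (1:ℂ)) (C lc), C_mul_monomial, mul_one]
  -- each binomial factor is not divisible by any variable
  have hprime : ∀ i : Fin N, Prime (X i : MvPolynomial (Fin N) ℂ) := prime_X_mv
  have hform : ∀ r : ℂ, (monomial u 1 - C r * monomial w 1 : MvPolynomial (Fin N) ℂ)
      = monomial u 1 + monomial w (-r) := by
    intro r
    rw [C_mul_monomial, mul_one, sub_eq_add_neg, ← map_neg]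
  have hBnd : ∀ i : Fin N, ∀ r ∈ rts,
      ¬ (X i ∣ (monomial u 1 - C r * monomial w 1 : MvPolynomial (Fin N) ℂ)) := by
    intro i r hr hdvd
    rw [hform] at hdvd
    rcases huwmin i with h0 | h0
    · have hc := X_dvd_iff'.1 hdvd u h0
      rw [coeff_add, coeff_monomial, coeff_monomial, if_pos rfl,
        if_neg (fun h => hune h.symm), add_zero] at hc
      exact one_ne_zero hc
    · have hc := X_dvd_iff'.1 hdvd w h0
      rw [coeff_add, coeff_monomial, coeff_monomial, if_pos rfl, if_neg hune, zero_add] at hc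
      exact (hr0 r hr) (neg_eq_zero.1 hc)
  have hQnotd : ∀ i : Fin N, ¬ (X i ∣ Q) := by
    intro i hdvd
    rw [hQ] at hdvd
    obtain ⟨b, hbmem, hbdvd⟩ := (hprime i).exists_mem_multiset_dvd hdvd
    obtain ⟨r, hrmem, rfl⟩ := Multiset.mem_map.1 hbmem
    exact hBnd i r hrmem hbdvd
  -- identify the cofactor monomial
  have hαaw : αa = m • w := by
    ext i
    have hle1 : αa i ≤ m * w i := by
      have h1 : (X i : MvPolynomial (Fin N) ℂ) ^ (αa i) ∣ f * (monomial w 1) ^ m := by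
        rw [hdag]
        exact Dvd.dvd.mul_right (X_pow_dvd_monomial (le_refl _) lc) Q
      have h2 := (hprime i).pow_dvd_of_dvd_mul_left _ (hvar i) h1
      rw [monomial_pow, one_pow] at h2
      have h3 := pow_X_dvd_monomial one_ne_zero h2
      simpa using h3
    have hle2 : m * w i ≤ αa i := by
      have h1 : (X i : MvPolynomial (Fin N) ℂ) ^ (m * w i) ∣ monomial αa lc * Q := by
        rw [← hdag]
        have hx : (X i : MvPolynomial (Fin N) ℂ) ^ (m * w i) ∣ (monomial w 1) ^ m := by
          rw [monomial_pow, one_pow]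
          exact X_pow_dvd_monomial (by simp) 1
        exact Dvd.dvd.mul_left hx f
      have h2 := (hprime i).pow_dvd_of_dvd_mul_right _ (hQnotd i) h1
      exact pow_X_dvd_monomial hlcne h2
    simp only [Finsupp.smul_apply, smul_eq_mul]
    omega
  have hWm : (monomial w 1 : MvPolynomial (Fin N) ℂ) ^ m ≠ 0 :=
    pow_ne_zero _ (fun h => one_ne_zero (monomial_eq_zero.1 h))
  have hfQ : f = C lc * Q := by
    apply mul_right_cancel₀ hWm
    rw [hdag]
    have hCW : C lc * monomial (m • w) 1 = monomial (m • w) lc := by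
      rw [C_mul_monomial, mul_one]
    calc monomial αa lc * Q = monomial (m • w) lc * Q := by rw [hαaw]
      _ = (C lc * monomial (m • w) 1) * Q := by rw [hCW]
      _ = C lc * Q * (monomial w 1) ^ m := by rw [monomial_pow, one_pow]; ring
  -- irreducibility forces m = 1
  have hmeq : m = 1 := by
    by_contra hmne
    have hm2 : 2 ≤ Multiset.card rts := by rw [hcard]; omega
    obtain ⟨r1, hr1⟩ : ∃ r, r ∈ rts := Multiset.card_pos_iff_exists_mem.1 (by omega)
    obtain ⟨s, hscons⟩ := Multiset.exists_cons_of_mem hr1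
    have hs1 : 1 ≤ Multiset.card s := by
      have := hm2
      rw [hscons] at this
      simp at this
      omega
    obtain ⟨r2, hr2⟩ : ∃ r, r ∈ s := Multiset.card_pos_iff_exists_mem.1 (by omega)
    obtain ⟨s', hscons'⟩ := Multiset.exists_cons_of_mem hr2
    have hr1mem : r1 ∈ rts := hr1
    have hr2mem : r2 ∈ rts := by rw [hscons, hscons']; simp
    set B1 : MvPolynomial (Fin N) ℂ := monomial u 1 - C r1 * monomial w 1 with hB1
    set B2 : MvPolynomial (Fin N) ℂ := monomial u 1 - C r2 * monomial w 1 with hB2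
    set rest : MvPolynomial (Fin N) ℂ :=
      ((s'.map fun r => monomial u 1 - C r * monomial w 1)).prod with hrest
    have hQsplit : Q = B1 * (B2 * rest) := by
      rw [hQ, hscons, hscons', Multiset.map_cons, Multiset.map_cons,
        Multiset.prod_cons, Multiset.prod_cons]
    have hfsplit : f = (C lc * B1) * (B2 * rest) := by rw [hfQ, hQsplit]; ring
    have hui0pos : 0 < u i0 := by rw [hui0]; omega
    rcases hirr.isUnit_or_isUnit hfsplit with hu1 | hu2
    · have hB1u : IsUnit B1 := (IsUnit.mul_iff.1 hu1).2
      exact binomial_not_unit (hr0 r1 hr1mem) i0 hui0pos hwi0 hB1u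
    · have hB2u : IsUnit B2 := (IsUnit.mul_iff.1 hu2).1
      exact binomial_not_unit (hr0 r2 hr2mem) i0 hui0pos hwi0 hB2u
  -- conclude: f is a binomial
  obtain ⟨r, hrts1⟩ := Multiset.card_eq_one.1 (by rw [hcard, hmeq])
  have hrmem : r ∈ rts := by rw [hrts1]; simp
  have hQone : Q = monomial u 1 - C r * monomial w 1 := by
    rw [hQ, hrts1]; simp
  have hfbin : f = monomial u lc + monomial w (-(lc * r)) := by
    rw [hfQ, hQone, mul_sub, C_mul_monomial, mul_one, ← mul_assoc, ← C_mul, C_mul_monomial,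
      mul_one, sub_eq_add_neg, ← map_neg]
  rw [hfbin, binomial_support hune hlcne
    (neg_ne_zero.2 (mul_ne_zero hlcne (hr0 r hrmem)))]
  exact Finset.card_pair hune



/-- The Newton polytope of a multivariable polynomial: the convex hull in `ℝ^N` of the exponent
vectors of its monomials with nonzero coefficient. -/
def newtonPolytope {N : ℕ} (f : MvPolynomial (Fin N) ℂ) : Set (Fin N → ℝ) :=
  convexHull ℝ {x : Fin N → ℝ | ∃ α ∈ f.support, x = fun i => (α i : ℝ)}

/-- Let `f ∈ ℂ[x_1,…,x_N]` be an irreducible polynomial, not divisible by any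
variable, whose Newton polytope is a line segment.  Then `f` is a binomial: it has exactly two
monomials with nonzero coefficient. -/
theorem irreducible_segment_newton_is_binomial (N : ℕ) (f : MvPolynomial (Fin N) ℂ)
    (hirr : Irreducible f)
    (hvar : ∀ i : Fin N, ¬ (X i ∣ f))
    (hseg : ∃ a b : Fin N → ℝ, a ≠ b ∧ newtonPolytope f = segment ℝ a b) :
    f.support.card = 2 := by
  classical
  obtain ⟨a, b, hab, hseg'⟩ := hseg
  set S : Set (Fin N → ℝ) := {x : Fin N → ℝ | ∃ α ∈ f.support, x = fun i => (α i : ℝ)} with hS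
  have hfin : S.Finite := by
    have himg : S = (fun (α : Fin N →₀ ℕ) => fun i => (α i : ℝ)) '' ↑f.support := by
      ext x
      simp only [hS, Set.mem_setOf_eq, Set.mem_image, Finset.mem_coe]
      constructor
      · rintro ⟨α, hα, rfl⟩; exact ⟨α, hα, rfl⟩
      · rintro ⟨α, hα, rfl⟩; exact ⟨α, hα, rfl⟩
    rw [himg]
    exact (f.support.finite_toSet).image _
  have hhull : convexHull ℝ S = segment ℝ a b := hseg'
  obtain ⟨j, hj⟩ : ∃ j, a j ≠ b j := by
    by_contra h
    push_neg at h
    exact hab (funext h)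
  -- a linear functional separating a and b
  obtain ⟨ℓ, hℓab⟩ : ∃ ℓ : (Fin N → ℝ) →ₗ[ℝ] ℝ, ℓ a < ℓ b := by
    rcases lt_or_gt_of_ne hj with h | h
    · exact ⟨LinearMap.proj j, h⟩
    · exact ⟨-LinearMap.proj j, by simpa using neg_lt_neg h⟩
  have haS : a ∈ S := endpoint_mem hfin hhull ℓ hℓab
  have hbS : b ∈ S := by
    have hhull' : convexHull ℝ S = segment ℝ b a := hhull.trans (segment_symm ℝ a b)
    exact endpoint_mem hfin hhull' (-ℓ) (by simpa using neg_lt_neg hℓab)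
  obtain ⟨αA, hαA, haeq⟩ := haS
  obtain ⟨αB, hαB, hbeq⟩ := hbS
  have haI : ∀ i, a i = (αA i : ℝ) := fun i => by rw [haeq]
  have hbI : ∀ i, b i = (αB i : ℝ) := fun i => by rw [hbeq]
  have hmem : ∀ α ∈ f.support, ∃ t : ℝ, 0 ≤ t ∧ t ≤ 1 ∧
      ∀ i, (α i : ℝ) = a i + t * (b i - a i) := by
    intro α hα
    have hx : (fun i => (α i : ℝ)) ∈ segment ℝ a b := by
      rw [← hhull]
      exact subset_convexHull ℝ S ⟨α, hα, rfl⟩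
    rw [segment_eq_image' ℝ a b] at hx
    obtain ⟨t, htI, hteq⟩ := hx
    refine ⟨t, (Set.mem_Icc.1 htI).1, (Set.mem_Icc.1 htI).2, fun i => ?_⟩
    have := congrFun hteq i
    simp only [Pi.add_apply, Pi.smul_apply, Pi.sub_apply, smul_eq_mul] at this
    rw [← this]
  have hjAB : αA j ≠ αB j := by
    intro h
    apply hj
    rw [haI j, hbI j, h]
  rcases lt_or_gt_of_ne hjAB with hlt | hlt
  · apply main_lemma f hirr hvar αA αB hαA hαB j hlt
    intro α hα
    obtain ⟨t, ht0, ht1, hteq⟩ := hmem α hα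
    exact ⟨t, ht0, ht1, fun i => by rw [hteq i, haI i, hbI i]⟩
  · apply main_lemma f hirr hvar αB αA hαB hαA j hlt
    intro α hα
    obtain ⟨t, ht0, ht1, hteq⟩ := hmem α hα
    refine ⟨1 - t, by linarith, by linarith, fun i => ?_⟩
    rw [hteq i, haI i, hbI i]
    ring
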